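/- Let k be a field, V a k-vector space, and b : ι → V a basis of V indexed by a well-ordered type ι (a linear order on ι in which every nonempty subset has a least element; for the statement, a linear order suffices since supports are finite). For a nonzero v ∈ V, the leading index of v is the maximum element of the (finite, nonempty) support of the coordinate representation of v in the basis b, and the leading coefficient of v is the coordinate of v at its leading index. A subset S ⊆ V is linearly self-reduced (with respect to b) if 0 ∉ S, every s ∈ S has leading coefficient 1, and for every s ∈ S, no index in the support of s is the leading index of any element of S other than s. Then: every finite-dimensional linear subspace W of V has exactly one linearly self-reduced subset S such that S spans W and S is linearly independent (i.e., S is a basis of W). -/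

import Mathlib

/-- `i` is the leading index of `v` with respect to the basis `b`: `i` lies in
the support of the coordinate representation of `v` and is the largest such index. -/
def IsLeadIdx {k V ι : Type*} [Field k] [AddCommGroup V] [Module k V]
    [LinearOrder ι] (b : Module.Basis ι k V) (v : V) (i : ι) : Prop :=
  i ∈ (b.repr v).support ∧ ∀ j ∈ (b.repr v).support, j ≤ i

/-- A subset `S` of `V` is linearly self-reduced with respect to the basis `b`:
`0 ∉ S`, every element of `S` has leading coefficient `1`, and no index in the
support of an element `s ∈ S` is the leading index of any element of `S` other
than `s`. -/
def LinearlySelfReduced {k V ι : Type*} [Field k] [AddCommGroup V] [Module k V]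
    [LinearOrder ι] (b : Module.Basis ι k V) (S : Set V) : Prop :=
  (0 : V) ∉ S ∧
    (∀ s ∈ S, ∀ i : ι, IsLeadIdx b s i → b.repr s i = 1) ∧
    (∀ s ∈ S, ∀ t ∈ S, t ≠ s → ∀ i ∈ (b.repr s).support, ¬ IsLeadIdx b t i)

set_option linter.unusedSectionVars false

section Aux

variable {k V ι : Type*} [Field k] [AddCommGroup V] [Module k V]
    [LinearOrder ι] (b : Module.Basis ι k V)

lemma leadIdx_unique {v : V} {i j : ι} (hi : IsLeadIdx b v i) (hj : IsLeadIdx b v j) : i = j :=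
  le_antisymm (hj.2 i hi.1) (hi.2 j hj.1)

lemma exists_leadIdx {v : V} (hv : v ≠ 0) : ∃ i, IsLeadIdx b v i := by
  have h : (b.repr v).support.Nonempty := by
    rw [Finsupp.support_nonempty_iff]
    simpa using hv
  exact ⟨(b.repr v).support.max' h, (b.repr v).support.max'_mem h,
    fun j hj => Finset.le_max' _ j hj⟩

lemma repr_sum_apply (F : Finset V) (c : V → k) (i : ι) :
    b.repr (∑ v ∈ F, c v • v) i = ∑ v ∈ F, c v * b.repr v i := by
  rw [map_sum, Finsupp.finset_sum_apply]
  simp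

lemma ne_zero_of_leadIdx {v : V} {i : ι} (h : IsLeadIdx b v i) : v ≠ 0 := by
  intro hv
  subst hv
  simpa using h.1

/-- Key lemma: the leading index of a nonzero combination of elements of a
linearly self-reduced set is the leading index of one of its elements. -/
lemma lead_of_combination {S : Set V} (hS : LinearlySelfReduced b S) (c : V →₀ k)
    (hsupp : ↑c.support ⊆ S) (hc : c ≠ 0) :
    ∃ s ∈ S, ∃ i, IsLeadIdx b s i ∧ IsLeadIdx b (∑ v ∈ c.support, c v • v) i := by
  classical
  have hFne : c.support.Nonempty := Finsupp.support_nonempty_iff.mpr hc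
  -- leads exist for each member
  have hnz : ∀ v ∈ c.support, v ≠ 0 := fun v hv h0 => hS.1 (h0 ▸ hsupp hv)
  -- choose a lead function
  obtain ⟨v₀, hv₀⟩ := id hFne
  obtain ⟨i₀, _⟩ := exists_leadIdx b (hnz v₀ hv₀)
  set ℓ : V → ι := fun v =>
    if h : ((b.repr v).support).Nonempty then (b.repr v).support.max' h else i₀ with hℓ
  have hlead : ∀ v, v ≠ 0 → IsLeadIdx b v (ℓ v) := by
    intro v hv
    have h : (b.repr v).support.Nonempty := by
      rw [Finsupp.support_nonempty_iff]; simpa using hv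
    rw [hℓ]
    simp only [dif_pos h]
    exact ⟨Finset.max'_mem _ h, fun j hj => Finset.le_max' _ j hj⟩
  obtain ⟨t, htF, hmax⟩ := Finset.exists_max_image c.support ℓ hFne
  have htS : t ∈ S := hsupp htF
  have htlead := hlead t (hnz t htF)
  have hstrict : ∀ v ∈ c.support, v ≠ t → ℓ v < ℓ t := by
    intro v hv hvt
    rcases lt_or_eq_of_le (hmax v hv) with h | h
    · exact h
    · exfalso
      have hv' := hlead v (hnz v hv)
      exact hS.2.2 v (hsupp hv) t htS (fun e => hvt e.symm) (ℓ v) hv'.1 (h ▸ htlead)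
  have hkey : b.repr (∑ v ∈ c.support, c v • v) (ℓ t) = c t * b.repr t (ℓ t) := by
    rw [repr_sum_apply]
    refine Finset.sum_eq_single_of_mem t htF ?_
    intro v hv hvt
    have : ℓ t ∉ (b.repr v).support := fun h =>
      absurd ((hlead v (hnz v hv)).2 _ h) (not_le.mpr (hstrict v hv hvt))
    rw [Finsupp.notMem_support_iff.mp this, mul_zero]
  have hne : b.repr (∑ v ∈ c.support, c v • v) (ℓ t) ≠ 0 := by
    rw [hkey]
    exact mul_ne_zero (Finsupp.mem_support_iff.mp htF) (Finsupp.mem_support_iff.mp htlead.1)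
  refine ⟨t, htS, ℓ t, htlead, Finsupp.mem_support_iff.mpr hne, ?_⟩
  intro j hj
  rw [Finsupp.mem_support_iff, repr_sum_apply] at hj
  obtain ⟨v, hv, hvne⟩ := Finset.exists_ne_zero_of_sum_ne_zero hj
  exact le_trans ((hlead v (hnz v hv)).2 j (Finsupp.mem_support_iff.mpr
    (right_ne_zero_of_mul hvne))) (hmax v hv)

lemma lead_of_mem_span {S : Set V} (hS : LinearlySelfReduced b S) {w : V}
    (hw : w ∈ Submodule.span k S) (hw0 : w ≠ 0) :
    ∃ s ∈ S, ∃ i, IsLeadIdx b s i ∧ IsLeadIdx b w i := by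
  obtain ⟨c, hsupp, hsum⟩ := Submodule.mem_span_set.mp hw
  have hc : c ≠ 0 := by
    rintro rfl
    simp [Finsupp.sum] at hsum
    exact hw0 hsum.symm
  have := lead_of_combination b hS c hsupp hc
  rwa [show (∑ v ∈ c.support, c v • v) = w from hsum] at this

lemma linearIndependent_of_selfReduced {S : Set V} (hS : LinearlySelfReduced b S) :
    LinearIndependent k ((↑) : S → V) := by
  rw [linearIndependent_subtype_iff, linearIndepOn_iff]
  intro l hl hl0
  by_contra hlne
  obtain ⟨s, _, i, _, hlead⟩ := lead_of_combination b hS l hl hlne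
  have : (∑ v ∈ l.support, l v • v) = 0 := by
    rw [← hl0, Finsupp.linearCombination_apply, Finsupp.sum]
    simp
  rw [this] at hlead
  simpa using hlead.1

lemma selfReduced_subset {S T : Set V} (hS : LinearlySelfReduced b S)
    (hT : LinearlySelfReduced b T) (h : Submodule.span k S = Submodule.span k T) :
    S ⊆ T := by
  intro s hs
  have hs0 : s ≠ 0 := fun h0 => hS.1 (h0 ▸ hs)
  have hsspan : s ∈ Submodule.span k T := h ▸ Submodule.subset_span hs
  obtain ⟨t, htT, i, htlead, hslead⟩ := lead_of_mem_span b hT hsspan hs0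
  by_contra hst
  have hts : s ≠ t := fun e => hst (e ▸ htT)
  have hu0 : s - t ≠ 0 := sub_ne_zero.mpr hts
  have huS : s - t ∈ Submodule.span k S :=
    sub_mem (Submodule.subset_span hs) (h ▸ Submodule.subset_span htT)
  have huT : s - t ∈ Submodule.span k T := h ▸ huS
  obtain ⟨s', hs'S, j, hs'lead, hulead⟩ := lead_of_mem_span b hS huS hu0
  obtain ⟨t', ht'T, j', ht'lead, hulead'⟩ := lead_of_mem_span b hT huT hu0
  have hjj' : j = j' := leadIdx_unique b hulead hulead'
  subst hjj'
  have hji : j ≠ i := by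
    intro e
    subst e
    have : b.repr (s - t) j = 0 := by
      rw [map_sub, Finsupp.sub_apply, hS.2.1 s hs j hslead, hT.2.1 t htT j htlead, sub_self]
    exact Finsupp.mem_support_iff.mp hulead.1 this
  have hjmem : j ∈ (b.repr s).support ∪ (b.repr t).support := by
    classical
    have : (b.repr (s - t)).support ⊆ (b.repr s).support ∪ (b.repr t).support := by
      rw [map_sub]; exact Finsupp.support_sub
    exact this hulead.1
  rcases Finset.mem_union.mp hjmem with hjs | hjt
  · -- j is in support of s; s' has lead j
    rcases eq_or_ne s' s with rfl | hne
    · exact hji (leadIdx_unique b hs'lead hslead)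
    · exact hS.2.2 s hs s' hs'S hne j hjs hs'lead
  · rcases eq_or_ne t' t with rfl | hne
    · exact hji (leadIdx_unique b ht'lead htlead)
    · exact hT.2.2 t htT t' ht'T hne j hjt ht'lead

end Aux

section Exist

variable {k V ι : Type*} [Field k] [AddCommGroup V] [Module k V]
    [LinearOrder ι] (b : Module.Basis ι k V)

lemma exists_selfReduced_finset :
    ∀ (n : ℕ) (W : Submodule k V), FiniteDimensional k W → Module.finrank k W = n →
      ∃ F : Finset V, LinearlySelfReduced b ↑F ∧ Submodule.span k (↑F : Set V) = W := by
  intro n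
  induction n using Nat.strong_induction_on with
  | _ n IH =>
  intro W hWfd hWn
  classical
  by_cases hbot : W = ⊥
  · refine ⟨∅, ⟨?_, ?_, ?_⟩, ?_⟩ <;> simp [hbot]
  · obtain ⟨w₁', hw₁'W, hw₁'0⟩ := (Submodule.ne_bot_iff W).mp hbot
    -- a finite generating set, and a finset of indices bounding all supports
    have hfg : W.FG := by
      have := (Module.finite_def.mp hWfd).map W.subtype
      rwa [Submodule.map_subtype_top] at this
    obtain ⟨G, hG⟩ := hfg
    set A : Finset ι := G.sup fun v => (b.repr v).support with hAdef
    have hA : ∀ w ∈ W, (b.repr w).support ⊆ A := by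
      intro w hw
      rw [← hG] at hw
      refine Submodule.span_induction (p := fun x _ => (b.repr x).support ⊆ A)
        ?_ ?_ ?_ ?_ hw
      · intro x hx
        exact Finset.le_sup (f := fun v => (b.repr v).support) (Finset.mem_coe.mp hx)
      · simp
      · intro x y _ _ hx hy
        rw [map_add]
        exact Finsupp.support_add.trans (Finset.union_subset hx hy)
      · intro a x _ hx
        rw [map_smul]
        exact Finsupp.support_smul.trans hx
    set Tf : Finset ι := A.filter (fun i => ∃ w ∈ W, w ≠ 0 ∧ IsLeadIdx b w i) with hTfdef
    have hTfne : Tf.Nonempty := by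
      obtain ⟨j, hj⟩ := exists_leadIdx b hw₁'0
      exact ⟨j, Finset.mem_filter.mpr ⟨hA w₁' hw₁'W hj.1, w₁', hw₁'W, hw₁'0, hj⟩⟩
    set i₀ : ι := Tf.max' hTfne with hi₀def
    obtain ⟨hi₀A, w₁, hw₁W, hw₁0, hw₁lead⟩ := Finset.mem_filter.mp (Tf.max'_mem hTfne)
    have hmax : ∀ w ∈ W, w ≠ 0 → ∀ j, IsLeadIdx b w j → j ≤ i₀ := fun w hw hw0 j hj =>
      Finset.le_max' _ j (Finset.mem_filter.mpr ⟨hA w hw hj.1, w, hw, hw0, hj⟩)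
    -- normalize
    set c₁ : k := b.repr w₁ i₀ with hc₁def
    have hc₁ : c₁ ≠ 0 := Finsupp.mem_support_iff.mp hw₁lead.1
    set w₀ : V := c₁⁻¹ • w₁ with hw₀def
    have hw₀W : w₀ ∈ W := Submodule.smul_mem _ _ hw₁W
    have hw₀i₀ : b.repr w₀ i₀ = 1 := by
      rw [hw₀def, map_smul, Finsupp.smul_apply, smul_eq_mul, ← hc₁def, inv_mul_cancel₀ hc₁]
    have hw₀supp : (b.repr w₀).support = (b.repr w₁).support := by
      rw [hw₀def, map_smul]
      exact Finsupp.support_smul_eq (inv_ne_zero hc₁)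
    have hw₀lead : IsLeadIdx b w₀ i₀ :=
      ⟨by rw [hw₀supp]; exact hw₁lead.1, by rw [hw₀supp]; exact hw₁lead.2⟩
    -- the hyperplane
    set W' : Submodule k V := W ⊓ LinearMap.ker (b.coord i₀) with hW'def
    have hW'le : W' ≤ W := inf_le_left
    have hW'lt : W' < W := by
      refine SetLike.lt_iff_le_and_exists.mpr ⟨hW'le, w₀, hw₀W, fun hmem => ?_⟩
      have := (Submodule.mem_inf.mp hmem).2
      rw [LinearMap.mem_ker, Module.Basis.coord_apply, hw₀i₀] at this
      exact one_ne_zero this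
    haveI hW'fd : FiniteDimensional k W' := Submodule.finiteDimensional_of_le hW'le
    have hlt : Module.finrank k W' < n := hWn ▸ Submodule.finrank_lt_finrank_of_lt hW'lt
    obtain ⟨F', hF'sr, hF'span⟩ := IH _ hlt W' hW'fd rfl
    -- facts about F'
    have hmemW' : ∀ s ∈ F', s ∈ W' := fun s hs =>
      hF'span ▸ Submodule.subset_span (Finset.mem_coe.mpr hs)
    have hszero : ∀ s ∈ F', b.repr s i₀ = 0 := by
      intro s hs
      have := (Submodule.mem_inf.mp (hmemW' s hs)).2
      rwa [LinearMap.mem_ker, Module.Basis.coord_apply] at this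
    have hsnz : ∀ s ∈ F', s ≠ 0 := fun s hs h0 =>
      hF'sr.1 (h0 ▸ Finset.mem_coe.mpr hs)
    set ℓ : V → ι := fun v =>
      if h : ((b.repr v).support).Nonempty then (b.repr v).support.max' h else i₀ with hℓ
    have hlead : ∀ v : V, v ≠ 0 → IsLeadIdx b v (ℓ v) := by
      intro v hv
      have h : (b.repr v).support.Nonempty := by
        rw [Finsupp.support_nonempty_iff]; simpa using hv
      rw [hℓ]
      simp only [dif_pos h]
      exact ⟨Finset.max'_mem _ h, fun j hj => Finset.le_max' _ j hj⟩
    have hℓlt : ∀ s ∈ F', ℓ s < i₀ := by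
      intro s hs
      have hle : ℓ s ≤ i₀ := hmax s (hW'le (hmemW' s hs)) (hsnz s hs) _ (hlead s (hsnz s hs))
      refine lt_of_le_of_ne hle fun he => ?_
      have := (hlead s (hsnz s hs)).1
      rw [he, Finsupp.mem_support_iff] at this
      exact this (hszero s hs)
    -- the new vector
    set w' : V := w₀ - ∑ s ∈ F', (b.repr w₀ (ℓ s)) • s with hw'def
    have hw'repr : ∀ j, b.repr w' j =
        b.repr w₀ j - ∑ s ∈ F', b.repr w₀ (ℓ s) * b.repr s j := by
      intro j
      rw [hw'def, map_sub, Finsupp.sub_apply, repr_sum_apply]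
    have hw'i₀ : b.repr w' i₀ = 1 := by
      rw [hw'repr, hw₀i₀, Finset.sum_eq_zero fun s hs => by rw [hszero s hs, mul_zero],
        sub_zero]
    have hw'le : ∀ j ∈ (b.repr w').support, j ≤ i₀ := by
      intro j hj
      by_contra hgt
      push_neg at hgt
      have h₀ : b.repr w₀ j = 0 := by
        by_contra h
        exact absurd (hw₀lead.2 j (Finsupp.mem_support_iff.mpr h)) (not_le.mpr hgt)
      have hs0 : ∀ s ∈ F', b.repr s j = 0 := by
        intro s hs
        by_contra h
        exact absurd ((hlead s (hsnz s hs)).2 j (Finsupp.mem_support_iff.mpr h))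
          (not_le.mpr ((hℓlt s hs).trans hgt))
      rw [Finsupp.mem_support_iff, hw'repr, h₀, Finset.sum_eq_zero
        fun s hs => by rw [hs0 s hs, mul_zero], sub_zero] at hj
      exact hj rfl
    have hw'lead : IsLeadIdx b w' i₀ :=
      ⟨Finsupp.mem_support_iff.mpr (by rw [hw'i₀]; exact one_ne_zero), hw'le⟩
    have hw'ℓ : ∀ t ∈ F', b.repr w' (ℓ t) = 0 := by
      intro t ht
      rw [hw'repr]
      have hsum : ∑ s ∈ F', b.repr w₀ (ℓ s) * b.repr s (ℓ t) = b.repr w₀ (ℓ t) := by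
        rw [Finset.sum_eq_single_of_mem t ht ?_]
        · rw [hF'sr.2.1 t (Finset.mem_coe.mpr ht) (ℓ t) (hlead t (hsnz t ht)), mul_one]
        · intro s hs hst
          have hrepr0 : b.repr s (ℓ t) = 0 := by
            by_contra h
            exact hF'sr.2.2 s (Finset.mem_coe.mpr hs) t (Finset.mem_coe.mpr ht)
              (fun e => hst e.symm) (ℓ t) (Finsupp.mem_support_iff.mpr h)
              (hlead t (hsnz t ht))
          rw [hrepr0, mul_zero]
      rw [hsum, sub_self]
    have hw'W : w' ∈ W := sub_mem hw₀W (Submodule.sum_mem _ fun s hs =>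
      Submodule.smul_mem _ _ (hW'le (hmemW' s hs)))
    have hw'0 : w' ≠ 0 := by
      intro h
      rw [h] at hw'i₀
      simp at hw'i₀
    have hw'F' : w' ∉ F' := fun h => by
      rw [hszero w' h] at hw'i₀
      exact zero_ne_one hw'i₀
    -- assemble
    refine ⟨insert w' F', ⟨?_, ?_, ?_⟩, ?_⟩
    · intro h
      rw [Finset.coe_insert, Set.mem_insert_iff] at h
      rcases h with h | h
      · exact hw'0 h.symm
      · exact hF'sr.1 h
    · intro s hs i hi
      rw [Finset.coe_insert, Set.mem_insert_iff] at hs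
      rcases hs with rfl | hs
      · rw [leadIdx_unique b hi hw'lead]
        exact hw'i₀
      · exact hF'sr.2.1 s hs i hi
    · intro s hs t ht hts i hi hLt
      rw [Finset.coe_insert, Set.mem_insert_iff] at hs ht
      rcases ht with rfl | ht
      · -- t = w'
        rcases hs with rfl | hs
        · exact hts rfl
        · have hieq : i = i₀ := leadIdx_unique b hLt hw'lead
          rw [hieq, Finsupp.mem_support_iff] at hi
          exact hi (hszero s (Finset.mem_coe.mp hs))
      · rcases hs with rfl | hs
        · -- s = w', t ∈ F'
          have hieq : i = ℓ t := leadIdx_unique b hLt (hlead t (hsnz t (Finset.mem_coe.mp ht)))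
          rw [hieq, Finsupp.mem_support_iff] at hi
          exact hi (hw'ℓ t (Finset.mem_coe.mp ht))
        · exact hF'sr.2.2 s hs t ht hts i hi hLt
    · rw [Finset.coe_insert, Submodule.span_insert, hF'span]
      refine le_antisymm (sup_le ((Submodule.span_singleton_le_iff_mem _ _).mpr hw'W) hW'le) ?_
      intro w hw
      rw [Submodule.mem_sup]
      refine ⟨(b.repr w i₀) • w', Submodule.mem_span_singleton.mpr ⟨_, rfl⟩,
        w - (b.repr w i₀) • w',
        Submodule.mem_inf.mpr ⟨sub_mem hw (Submodule.smul_mem _ _ hw'W), ?_⟩, by abel⟩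
      rw [LinearMap.mem_ker, Module.Basis.coord_apply, map_sub, Finsupp.sub_apply, map_smul,
        Finsupp.smul_apply, smul_eq_mul, hw'i₀, mul_one, sub_self]

end Exist


/-- Every finite dimensional subspace of a vector space with a basis indexed by
a (well-)ordered type has a unique linearly self-reduced basis. -/
theorem existsUnique_linearlySelfReduced_basis {k V ι : Type*} [Field k]
    [AddCommGroup V] [Module k V] [LinearOrder ι] (b : Module.Basis ι k V)
    (W : Submodule k V) (hW : FiniteDimensional k W) :
    ∃! S : Set V, LinearlySelfReduced b S ∧ Submodule.span k S = W ∧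
      LinearIndependent k ((↑) : S → V) := by
  obtain ⟨F, hLSR, hspan⟩ :=
    exists_selfReduced_finset b (Module.finrank k W) W hW rfl
  refine ⟨↑F, ⟨hLSR, hspan, linearIndependent_of_selfReduced b hLSR⟩, ?_⟩
  rintro T ⟨hT, hTspan, -⟩
  exact Set.Subset.antisymm (selfReduced_subset b hT hLSR (by rw [hTspan, hspan]))
    (selfReduced_subset b hLSR hT (by rw [hTspan, hspan]))
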